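/- Let f and g be negative real numbers. There exist real numbers τ and a such that ν = iτ satisfies ν² − (1+ia)·g·ν − (1+ia)·f = 0 if and only if f + g² < 0; and in that case the only solutions are (τ, a) = (f/√(−f−g²), −g/√(−f−g²)) and (τ, a) = (−f/√(−f−g²), g/√(−f−g²)). -/

import Mathlib

lemma keyeq (f g τ a : ℝ) :
    (Complex.I * τ) ^ 2 - (1 + Complex.I * a) * g * (Complex.I * τ)
      - (1 + Complex.I * a) * f = 0 ↔
    (-τ^2 + a*g*τ - f = 0 ∧ -(g*τ) - a*f = 0) := by
  have h : (Complex.I * τ) ^ 2 - (1 + Complex.I * a) * g * (Complex.I * τ)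
      - (1 + Complex.I * a) * f
      = ((-τ^2 + a*g*τ - f : ℝ) : ℂ) + Complex.I * ((-(g*τ) - a*f : ℝ) : ℂ) := by
    push_cast
    ring_nf
    simp [Complex.I_sq]
    ring
  rw [h]
  constructor
  · intro he
    have hre := congrArg Complex.re he
    have him := congrArg Complex.im he
    push_cast at hre him
    simp [← Complex.ofReal_pow] at hre him
    exact ⟨hre, him⟩
  · rintro ⟨h1, h2⟩; rw [h1, h2]; simp

theorem stmt_7 (f g : ℝ) (hf : f < 0) (hg : g < 0) :
    ((∃ τ a : ℝ,
        (Complex.I * τ) ^ 2 - (1 + Complex.I * a) * g * (Complex.I * τ)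
          - (1 + Complex.I * a) * f = 0) ↔ f + g ^ 2 < 0) ∧
    (f + g ^ 2 < 0 →
      ∀ τ a : ℝ,
        ((Complex.I * τ) ^ 2 - (1 + Complex.I * a) * g * (Complex.I * τ)
            - (1 + Complex.I * a) * f = 0 ↔
          ((τ = f / Real.sqrt (-f - g ^ 2) ∧ a = -g / Real.sqrt (-f - g ^ 2)) ∨
            (τ = -f / Real.sqrt (-f - g ^ 2) ∧ a = g / Real.sqrt (-f - g ^ 2))))) := by
  have hfne : f ≠ 0 := ne_of_lt hf
  constructor
  · constructor
    · rintro ⟨τ, a, he⟩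
      rw [keyeq] at he
      obtain ⟨h1, h2⟩ := he
      -- a*f = -(g*τ)
      have ha : a = -(g*τ)/f := by field_simp; linarith
      have hτ : τ ≠ 0 := by
        rintro rfl
        simp at h1
        linarith
      have key : τ^2 * (-f - g^2) = f^2 := by
        rw [ha] at h1
        field_simp at h1
        nlinarith [h1]
      nlinarith [key, pow_two_pos_of_ne_zero hτ, pow_two_pos_of_ne_zero hfne]
    · intro h
      set s := Real.sqrt (-f - g^2) with hs
      have hspos : 0 < s := Real.sqrt_pos.mpr (by linarith)
      have hs2 : s^2 = -f - g^2 := Real.sq_sqrt (by linarith)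
      refine ⟨f/s, -g/s, ?_⟩
      rw [keyeq]
      constructor
      · field_simp
        linear_combination (-f) * hs2
      · field_simp
        ring
  · intro h τ a
    set s := Real.sqrt (-f - g^2) with hs
    have hspos : 0 < s := Real.sqrt_pos.mpr (by linarith)
    have hs2 : s^2 = -f - g^2 := Real.sq_sqrt (by linarith)
    rw [keyeq]
    constructor
    · rintro ⟨h1, h2⟩
      have ha : a = -(g*τ)/f := by field_simp; linarith
      have key : τ^2 * (-f - g^2) = f^2 := by
        rw [ha] at h1
        field_simp at h1
        nlinarith [h1]
      have hτ2 : τ^2 = (f/s)^2 := by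
        field_simp
        linear_combination τ^2 * hs2 + key
      rcases sq_eq_sq_iff_eq_or_eq_neg.mp hτ2 with h3 | h3
      · left
        refine ⟨h3, ?_⟩
        rw [ha, h3]
        field_simp
      · right
        refine ⟨by rw [h3]; ring, ?_⟩
        rw [ha, h3]
        field_simp
    · rintro (⟨rfl, rfl⟩ | ⟨rfl, rfl⟩) <;>
        refine ⟨?_, ?_⟩ <;> field_simp <;>
          first
          | linear_combination (-f*s^2) * hs2
          | linear_combination (-f) * hs2
          | ring
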